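/- In the marriage/matching special case (all projects are pairs, each agent's endowment is 1), maximal states are exactly maximal matchings of the feasibility graph, and the stochastically stable states are exactly the maximum-cardinality matchings. -/

import Mathlib

open scoped Classical

noncomputable section

namespace TF

/-- A state `x` (a finite set of projects) is feasible if each agent's total
time spent on projects in `x` is within her endowment. -/
def Feasible {N P : Type} (w : N → ℕ) (t : P → N → ℕ) (x : Finset P) : Prop :=
  ∀ i, (∑ p ∈ x, t p i) ≤ w i

/-- Assumption (v0): adding a feasible project strictly increases the utility
of each of its members. -/
def V0 {N P : Type} (w : N → ℕ) (t : P → N → ℕ) (mem : P → Finset N)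
    (u : N → Finset P → ℝ) : Prop :=
  ∀ (x : Finset P) (p : P), p ∉ x → Feasible w t x → Feasible w t (insert p x) →
    ∀ i ∈ mem p, u i x < u i (insert p x)

/-- Myopic team-wise stability. -/
def MTS {N P : Type} (w : N → ℕ) (t : P → N → ℕ) (mem : P → Finset N)
    (u : N → Finset P → ℝ) (x : Finset P) : Prop :=
  Feasible w t x ∧
  (∀ p ∈ x, ∀ i ∈ mem p, u i (x.erase p) ≤ u i x) ∧
  ¬ ∃ p, p ∉ x ∧ Feasible w t (insert p x) ∧ ∀ i ∈ mem p, u i x < u i (insert p x)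

/-- Maximal feasible states (the set `M`). -/
def MaximalState {N P : Type} (w : N → ℕ) (t : P → N → ℕ) (x : Finset P) : Prop :=
  Feasible w t x ∧ ∀ y, Feasible w t y → x ⊆ y → x = y

/-- Feasible states with the maximum number of projects (the set `L`). -/
def MaxProjects {N P : Type} (w : N → ℕ) (t : P → N → ℕ) (x : Finset P) : Prop :=
  Feasible w t x ∧ ∀ y, Feasible w t y → y.card ≤ x.card

/-- One (state-changing) step of the myopic team-wise dynamics: a feasible
project is added. -/
def Step {N P : Type} (w : N → ℕ) (t : P → N → ℕ) (x y : Finset P) : Prop :=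
  ∃ p, p ∉ x ∧ Feasible w t (insert p x) ∧ y = insert p x

def Accessible {N P : Type} (w : N → ℕ) (t : P → N → ℕ) :
    Finset P → Finset P → Prop :=
  Relation.ReflTransGen (Step w t)

/-- Absorbing states of the unperturbed myopic team-wise dynamics. -/
def Absorbing {N P : Type} (w : N → ℕ) (t : P → N → ℕ) (x : Finset P) : Prop :=
  ∀ y, ¬ Step w t x y

/-- Recurrent states: every state accessible from `x` can access `x` back. -/
def Recurrent {N P : Type} (w : N → ℕ) (t : P → N → ℕ) (x : Finset P) : Prop :=
  ∀ y, Accessible w t x y → Accessible w t y x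

/-- Resistance between absorbing states: `ℓ(x) - ℓ(x ∩ x')`. -/
def rstar {P : Type} (x y : Finset P) : ℕ := x.card - (x ∩ y).card

/-- An `root`-tree: a parent map on the absorbing (maximal) states, every
maximal state reaching the root by iteration. -/
def IsTree {N P : Type} (w : N → ℕ) (t : P → N → ℕ) (root : Finset P)
    (f : Finset P → Finset P) : Prop :=
  f root = root ∧
  ∀ y : Finset P, MaximalState w t y →
    MaximalState w t (f y) ∧ ∃ k : ℕ, f^[k] y = root

/-- Total resistance of a tree: sum of edge resistances. -/
def treeRes {N P : Type} [Fintype P] (w : N → ℕ) (t : P → N → ℕ) (root : Finset P)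
    (f : Finset P → Finset P) : ℕ :=
  ∑ y ∈ Finset.univ.filter (fun y : Finset P => MaximalState w t y ∧ y ≠ root),
    rstar y (f y)

/-- Stochastic potential: minimum resistance over trees rooted at `root`. -/
def potential {N P : Type} [Fintype P] (w : N → ℕ) (t : P → N → ℕ)
    (root : Finset P) : ℕ :=
  sInf { n : ℕ | ∃ f, IsTree w t root f ∧ treeRes w t root f = n }

/-- Stochastically stable states: absorbing (maximal) states of minimum
stochastic potential. -/
def StochStable {N P : Type} [Fintype P] (w : N → ℕ) (t : P → N → ℕ)
    (x : Finset P) : Prop :=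
  MaximalState w t x ∧
  ∀ y, MaximalState w t y → potential w t x ≤ potential w t y

/-- A blocking operation of state `x` by coalition `C`, destroying the
projects in `y` and forming the projects in `z`, with switching cost `c`
per exited project. -/
def Blocking {N P : Type} (w : N → ℕ) (t : P → N → ℕ) (mem : P → Finset N)
    (u : N → Finset P → ℝ) (c : ℝ) (x : Finset P) (C : Finset N)
    (y z : Finset P) : Prop :=
  C.Nonempty ∧ y ⊆ x ∧ (∀ p ∈ y, ∃ i ∈ C, i ∈ mem p) ∧
  (∀ p ∈ z, p ∉ x) ∧ (∀ p ∈ z, ∀ j ∈ mem p, j ∈ C) ∧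
  Feasible w t ((x \ y) ∪ z) ∧
  ∀ i ∈ C, u i x < u i ((x \ y) ∪ z) - c * ((y.filter (fun p => i ∈ mem p)).card : ℝ)

/-- Coalitionally stable states with switching cost `c`. -/
def CSc {N P : Type} (w : N → ℕ) (t : P → N → ℕ) (mem : P → Finset N)
    (u : N → Finset P → ℝ) (c : ℝ) (x : Finset P) : Prop :=
  Feasible w t x ∧ ¬ ∃ C y z, Blocking w t mem u c x C y z

/-- One (state-changing) step of the coalition-wise dynamics with cost `c`. -/
def CStep {N P : Type} (w : N → ℕ) (t : P → N → ℕ) (mem : P → Finset N)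
    (u : N → Finset P → ℝ) (c : ℝ) (x x' : Finset P) : Prop :=
  ∃ C y z, Blocking w t mem u c x C y z ∧ x' = (x \ y) ∪ z

def CAccessible {N P : Type} (w : N → ℕ) (t : P → N → ℕ) (mem : P → Finset N)
    (u : N → Finset P → ℝ) (c : ℝ) : Finset P → Finset P → Prop :=
  Relation.ReflTransGen (CStep w t mem u c)

def CAbsorbing {N P : Type} (w : N → ℕ) (t : P → N → ℕ) (mem : P → Finset N)
    (u : N → Finset P → ℝ) (c : ℝ) (x : Finset P) : Prop :=
  ∀ x', ¬ CStep w t mem u c x x'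

def CRecurrent {N P : Type} (w : N → ℕ) (t : P → N → ℕ) (mem : P → Finset N)
    (u : N → Finset P → ℝ) (c : ℝ) (x : Finset P) : Prop :=
  ∀ y, CAccessible w t mem u c x y → CAccessible w t mem u c y x

/-- There is a (one-step) improving path from `x` to `x'`. -/
def ImprovesTo {N P : Type} (w : N → ℕ) (t : P → N → ℕ) (mem : P → Finset N)
    (u : N → Finset P → ℝ) (x x' : Finset P) : Prop :=
  ∃ C y z, Blocking w t mem u 0 x C y z ∧ x' = (x \ y) ∪ z

/-- The set `F(x)` of states reachable from `x` along a one-step improving path. -/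
def FSet {N P : Type} (w : N → ℕ) (t : P → N → ℕ) (mem : P → Finset N)
    (u : N → Finset P → ℝ) (x : Finset P) : Set (Finset P) :=
  { x' | ImprovesTo w t mem u x x' }

/-- Perturbed reachability: additions of feasible projects are free, while
each deletion of an existing project costs one perturbation. -/
inductive PReach {N P : Type} (w : N → ℕ) (t : P → N → ℕ) :
    Finset P → Finset P → ℕ → Prop
  | refl (x : Finset P) : PReach w t x x 0
  | add {x y : Finset P} {p : P} {n : ℕ} (hp : p ∉ x)
      (hf : Feasible w t (insert p x)) (h : PReach w t (insert p x) y n) :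
      PReach w t x y n
  | del {x y : Finset P} {p : P} {n : ℕ} (hp : p ∈ x)
      (h : PReach w t (x.erase p) y n) : PReach w t x y (n + 1)


section Aux

variable {N P : Type} [Fintype P]

lemma rstar_add (a b : Finset P) : rstar a b + b.card = rstar b a + a.card := by
  have h1 : (a ∩ b).card ≤ a.card := Finset.card_le_card Finset.inter_subset_left
  have h2 : (b ∩ a).card ≤ b.card := Finset.card_le_card Finset.inter_subset_left
  have h3 : b ∩ a = a ∩ b := Finset.inter_comm b a
  unfold rstar
  rw [h3] at h2
  rw [h3]
  omega

lemma iter_maximal (w : N → ℕ) (t : P → N → ℕ) {r : Finset P} {f : Finset P → Finset P}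
    (hf : IsTree w t r f) {y : Finset P} (hy : MaximalState w t y) (j : ℕ) :
    MaximalState w t (f^[j] y) := by
  induction j with
  | zero => exact hy
  | succ j ih => rw [Function.iterate_succ_apply']; exact (hf.2 _ ih).1

lemma potential_nonempty (w : N → ℕ) (t : P → N → ℕ) {r : Finset P} (hr : MaximalState w t r) :
    {n : ℕ | ∃ f, IsTree w t r f ∧ treeRes w t r f = n}.Nonempty :=
  ⟨_, (fun _ => r), ⟨rfl, fun y hy => ⟨hr, 1, by simp⟩⟩, rfl⟩

lemma reroot (w : N → ℕ) (t : P → N → ℕ) {r : Finset P} {f : Finset P → Finset P}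
    (hf : IsTree w t r f) {m : Finset P} (hm : MaximalState w t m) :
    ∃ g, IsTree w t m g ∧ treeRes w t m g + m.card = treeRes w t r f + r.card := by
  classical
  by_cases hmr : m = r
  · subst hmr; exact ⟨f, hf, rfl⟩
  obtain ⟨k, hk⟩ := (hf.2 m hm).2
  have hex : ∃ n, f^[n] m = r := ⟨k, hk⟩
  set s := Nat.find hex with hs
  have hus : f^[s] m = r := Nat.find_spec hex
  set u : ℕ → Finset P := fun j => f^[j] m with hudef
  have hu0 : u 0 = m := rfl
  have huss : u s = r := hus
  have umax : ∀ j, MaximalState w t (u j) := fun j => iter_maximal w t hf hm j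
  have ustep : ∀ j, u (j + 1) = f (u j) := fun j => Function.iterate_succ_apply' f j m
  have uinj : ∀ j k, j ≤ s → k ≤ s → u j = u k → j = k := by
    have key : ∀ j k, j < k → k ≤ s → u j = u k → False := by
      intro j k hjk hks he
      have h1 : u (s - k + j) = r := by
        have h2 : f^[s - k + k] m = r := by rw [Nat.sub_add_cancel hks]; exact hus
        calc u (s - k + j) = f^[s-k] (u j) := Function.iterate_add_apply f (s-k) j m
          _ = f^[s-k] (u k) := by rw [he]
          _ = f^[s - k + k] m := (Function.iterate_add_apply f (s-k) k m).symm
          _ = r := h2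
      exact Nat.find_min hex (by omega : s - k + j < s) h1
    intro j k hj hk he
    rcases lt_trichotomy j k with h | h | h
    · exact absurd he (fun he => key j k h hk he)
    · exact h
    · exact absurd he.symm (fun he => key k j h hj he)
  have hs1 : 0 < s := by
    rcases Nat.eq_zero_or_pos s with h | h
    · exfalso; apply hmr; rw [h] at huss; exact huss
    · exact h
  set g : Finset P → Finset P := fun v =>
    if hv : ∃ j, j < s ∧ v = u (j + 1) then u hv.choose else if v = m then m else f v
    with hgdef
  have g_at : ∀ j, j < s → g (u (j + 1)) = u j := by
    intro j hj
    have hv : ∃ j', j' < s ∧ u (j + 1) = u (j' + 1) := ⟨j, hj, rfl⟩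
    have h1 : g (u (j+1)) = u hv.choose := by
      simp only [hgdef]
      exact dif_pos hv
    obtain ⟨hj', he⟩ := hv.choose_spec
    have h2 := uinj (j + 1) (hv.choose + 1) (by omega) (by omega) he
    rw [h1, show hv.choose = j by omega]
  have g_m : g m = m := by
    have hnot : ¬ ∃ j, j < s ∧ m = u (j+1) := by
      rintro ⟨j, hj, he⟩
      have h2 := uinj 0 (j+1) (by omega) (by omega) he
      omega
    simp only [hgdef]
    rw [dif_neg hnot]
    simp
  have g_off : ∀ v, (∀ j, j ≤ s → v ≠ u j) → g v = f v := by
    intro v hv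
    have h1 : ¬ ∃ j, j < s ∧ v = u (j+1) := by
      rintro ⟨j, hj, he⟩; exact hv (j+1) (by omega) he
    have h2 : v ≠ m := hv 0 (by omega)
    simp only [hgdef]
    rw [dif_neg h1, if_neg h2]
  have gmax : ∀ y, MaximalState w t y → MaximalState w t (g y) := by
    intro y hy
    by_cases h1 : ∃ j, j < s ∧ y = u (j + 1)
    · obtain ⟨j, hj, he⟩ := h1
      rw [he, g_at j hj]; exact umax j
    · by_cases h2 : y = m
      · rw [h2, g_m]; exact hm
      · rw [g_off y ?_]
        · exact (hf.2 y hy).1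
        · intro j hj he
          rcases Nat.eq_zero_or_pos j with h0 | h0
          · apply h2; rw [he, h0, hu0]
          · exact h1 ⟨j - 1, by omega, by rw [he]; congr 1; omega⟩
  have path_reach : ∀ j, j ≤ s → g^[j] (u j) = m := by
    intro j
    induction j with
    | zero => intro _; exact hu0
    | succ j ih =>
      intro hj
      rw [Function.iterate_succ_apply, g_at j (by omega)]
      exact ih (by omega)
  have reach : ∀ k y, MaximalState w t y → f^[k] y = r → ∃ n, g^[n] y = m := by
    intro k
    induction k with
    | zero =>
      intro y hy hr0
      have hy' : y = u s := by rw [huss]; exact hr0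
      exact ⟨s, by rw [hy']; exact path_reach s le_rfl⟩
    | succ k ih =>
      intro y hy hr0
      by_cases hpath : ∃ j, j ≤ s ∧ y = u j
      · obtain ⟨j, hj, he⟩ := hpath
        exact ⟨j, by rw [he]; exact path_reach j hj⟩
      · push_neg at hpath
        have hgy : g y = f y := g_off y hpath
        obtain ⟨n, hn⟩ := ih (f y) (hf.2 y hy).1
          (by rw [← Function.iterate_succ_apply]; exact hr0)
        exact ⟨n + 1, by rw [Function.iterate_succ_apply, hgy]; exact hn⟩
  have key_sum : ∀ n, (∑ j ∈ Finset.range n, rstar (u (j+1)) (u j)) + (u 0).card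
      = (∑ j ∈ Finset.range n, rstar (u j) (u (j+1))) + (u n).card := by
    intro n
    induction n with
    | zero => simp
    | succ n ih =>
      rw [Finset.sum_range_succ, Finset.sum_range_succ]
      have h := rstar_add (u (n+1)) (u n)
      omega
  set Path : Finset (Finset P) := (Finset.range (s+1)).image u with hPath
  set D : Finset (Finset P) :=
    (Finset.univ.filter (fun y => MaximalState w t y)) \ Path with hD
  have decompR : Finset.univ.filter (fun y : Finset P => MaximalState w t y ∧ y ≠ r)
      = D ∪ (Finset.range s).image u := by
    ext y
    simp only [hD, hPath, Finset.mem_filter, Finset.mem_union, Finset.mem_sdiff,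
      Finset.mem_image, Finset.mem_range, Finset.mem_univ, true_and]
    constructor
    · rintro ⟨hy, hyr⟩
      by_cases hp : ∃ j, j < s + 1 ∧ u j = y
      · obtain ⟨j, hj, he⟩ := hp
        refine Or.inr ⟨j, ?_, he⟩
        rcases Nat.lt_or_ge j s with h | h
        · exact h
        · exfalso; apply hyr; rw [← he, show j = s by omega]; exact huss
      · exact Or.inl ⟨hy, hp⟩
    · rintro (⟨hy, hp⟩ | ⟨j, hj, he⟩)
      · exact ⟨hy, fun hyr => hp ⟨s, by omega, huss.trans hyr.symm⟩⟩
      · refine ⟨he ▸ umax j, fun hyr => ?_⟩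
        have h2 : j = s := uinj j s (by omega) le_rfl ((he.trans hyr).trans huss.symm)
        omega
  have decompM : Finset.univ.filter (fun y : Finset P => MaximalState w t y ∧ y ≠ m)
      = D ∪ (Finset.range s).image (fun j => u (j+1)) := by
    ext y
    simp only [hD, hPath, Finset.mem_filter, Finset.mem_union, Finset.mem_sdiff,
      Finset.mem_image, Finset.mem_range, Finset.mem_univ, true_and]
    constructor
    · rintro ⟨hy, hym⟩
      by_cases hp : ∃ j, j < s + 1 ∧ u j = y
      · obtain ⟨j, hj, he⟩ := hp
        have hj0 : j ≠ 0 := by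
          intro h0; apply hym; rw [← he, h0, hu0]
        exact Or.inr ⟨j - 1, by omega, by rw [show j - 1 + 1 = j by omega]; exact he⟩
      · exact Or.inl ⟨hy, hp⟩
    · rintro (⟨hy, hp⟩ | ⟨j, hj, he⟩)
      · exact ⟨hy, fun hym => hp ⟨0, by omega, hu0.trans hym.symm⟩⟩
      · refine ⟨he ▸ umax (j+1), fun hym => ?_⟩
        have h2 := uinj (j+1) 0 (by omega) (by omega) ((he.trans hym).trans hu0.symm)
        omega
  have hsubPath : ∀ j, j ≤ s → u j ∈ Path := by
    intro j hj
    rw [hPath]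
    exact Finset.mem_image.mpr ⟨j, Finset.mem_range.mpr (by omega), rfl⟩
  have disjR : Disjoint D ((Finset.range s).image u) := by
    rw [Finset.disjoint_right]
    intro y hy hyD
    simp only [Finset.mem_image, Finset.mem_range] at hy
    obtain ⟨j, hj, he⟩ := hy
    rw [hD, Finset.mem_sdiff] at hyD
    exact hyD.2 (he ▸ hsubPath j (by omega))
  have disjM : Disjoint D ((Finset.range s).image (fun j => u (j+1))) := by
    rw [Finset.disjoint_right]
    intro y hy hyD
    simp only [Finset.mem_image, Finset.mem_range] at hy
    obtain ⟨j, hj, he⟩ := hy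
    rw [hD, Finset.mem_sdiff] at hyD
    exact hyD.2 (he ▸ hsubPath (j+1) (by omega))
  have hDg : ∀ y ∈ D, g y = f y := by
    intro y hy
    rw [hD, Finset.mem_sdiff] at hy
    refine g_off y fun j hj he => hy.2 ?_
    exact he ▸ hsubPath j hj
  have uinj1 : ∀ a ∈ Finset.range s, ∀ b ∈ Finset.range s, u a = u b → a = b := by
    intro a ha b hb he
    exact uinj a b (le_of_lt (Finset.mem_range.mp ha)) (le_of_lt (Finset.mem_range.mp hb)) he
  have uinj2 : ∀ a ∈ Finset.range s, ∀ b ∈ Finset.range s, u (a+1) = u (b+1) → a = b := by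
    intro a ha b hb he
    have := uinj (a+1) (b+1) (Finset.mem_range.mp ha) (Finset.mem_range.mp hb) he
    omega
  have treeR : treeRes w t r f
      = (∑ y ∈ D, rstar y (f y)) + ∑ j ∈ Finset.range s, rstar (u j) (u (j+1)) := by
    unfold treeRes
    rw [decompR, Finset.sum_union disjR, Finset.sum_image uinj1]
    congr 1
    refine Finset.sum_congr rfl fun j _ => ?_
    rw [← ustep j]
  have treeM : treeRes w t m g
      = (∑ y ∈ D, rstar y (f y)) + ∑ j ∈ Finset.range s, rstar (u (j+1)) (u j) := by
    unfold treeRes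
    rw [decompM, Finset.sum_union disjM, Finset.sum_image uinj2]
    congr 1
    · refine Finset.sum_congr rfl fun y hy => ?_
      rw [hDg y hy]
    · refine Finset.sum_congr rfl fun j hj => ?_
      rw [g_at j (Finset.mem_range.mp hj)]
  refine ⟨g, ⟨g_m, fun y hy => ⟨gmax y hy, ?_⟩⟩, ?_⟩
  · obtain ⟨k', hk'⟩ := (hf.2 y hy).2
    exact reach k' y hy hk'
  · have h0 : (u 0).card = m.card := by rw [hu0]
    have hsc : (u s).card = r.card := by rw [huss]
    have hsum := key_sum s
    rw [treeR, treeM]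
    omega

end Aux

/-- In the marriage/matching special case (all projects are pairs, unit time
contributions, unit endowments): feasible states are exactly matchings,
maximal states are exactly maximal matchings, and stochastically stable
states are exactly maximum-cardinality matchings. -/
theorem matching_special_case {N P : Type} [Fintype N] [Fintype P]
    (w : N → ℕ) (t : P → N → ℕ) (mem : P → Finset N) (u : N → Finset P → ℝ)
    (hs2 : ∀ p, (mem p).card = 2)
    (ht : ∀ p i, t p i = if i ∈ mem p then 1 else 0)
    (hw : ∀ i, w i = 1)
    (hinj : ∀ p q, mem p = mem q → p = q)
    (hv0 : V0 w t mem u) :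
    (∀ x : Finset P, Feasible w t x ↔
      (x : Set P).Pairwise fun p q => Disjoint (mem p) (mem q)) ∧
    (∀ x : Finset P, MaximalState w t x ↔
      ((x : Set P).Pairwise (fun p q => Disjoint (mem p) (mem q)) ∧
        ∀ p ∉ x, ∃ q ∈ x, ¬ Disjoint (mem p) (mem q))) ∧
    (∀ x : Finset P, StochStable w t x ↔
      ((x : Set P).Pairwise (fun p q => Disjoint (mem p) (mem q)) ∧
        ∀ y : Finset P, (y : Set P).Pairwise (fun p q => Disjoint (mem p) (mem q)) →
          y.card ≤ x.card)) := by
  classical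
  have hfeas : ∀ x : Finset P, Feasible w t x ↔
      (x : Set P).Pairwise fun p q => Disjoint (mem p) (mem q) := by
    intro x
    constructor
    · intro hx p hp q hq hpq
      rw [Finset.disjoint_left]
      intro i hip hiq
      have hxi := hx i
      rw [hw i] at hxi
      have hsub : {p, q} ⊆ x := by
        intro a ha
        simp only [Finset.mem_insert, Finset.mem_singleton] at ha
        rcases ha with h | h
        · exact h ▸ hp
        · exact h ▸ hq
      have h2 : 2 ≤ ∑ p' ∈ x, t p' i := by
        calc 2 = ∑ p' ∈ ({p, q} : Finset P), t p' i := by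
              rw [Finset.sum_pair hpq, ht, ht, if_pos hip, if_pos hiq]
          _ ≤ _ := Finset.sum_le_sum_of_subset hsub
      omega
    · intro hx i
      rw [hw i]
      have hcf : ∑ p ∈ x, t p i = (x.filter (fun p => i ∈ mem p)).card := by
        rw [Finset.card_filter]
        exact Finset.sum_congr rfl fun p _ => ht p i
      rw [hcf, Finset.card_le_one]
      intro p hp q hq
      simp only [Finset.mem_filter] at hp hq
      by_contra hne
      exact (Finset.disjoint_left.mp (hx hp.1 hq.1 hne) hp.2) hq.2
  have hmaxiff : ∀ x : Finset P, MaximalState w t x ↔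
      ((x : Set P).Pairwise (fun p q => Disjoint (mem p) (mem q)) ∧
        ∀ p ∉ x, ∃ q ∈ x, ¬ Disjoint (mem p) (mem q)) := by
    intro x
    constructor
    · rintro ⟨hxf, hxm⟩
      refine ⟨(hfeas x).mp hxf, fun p hp => ?_⟩
      by_contra hcon
      push_neg at hcon
      have hins : Feasible w t (insert p x) := by
        rw [hfeas]
        intro a ha b hb hab
        simp only [Finset.coe_insert, Set.mem_insert_iff, Finset.mem_coe] at ha hb
        rcases ha with rfl | ha
        · rcases hb with rfl | hb
          · exact absurd rfl hab
          · exact hcon b hb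
        · rcases hb with rfl | hb
          · exact (hcon a ha).symm
          · exact (hfeas x).mp hxf ha hb hab
      have heq := hxm (insert p x) hins (Finset.subset_insert p x)
      exact hp (heq ▸ Finset.mem_insert_self p x)
    · rintro ⟨hxp, hxm⟩
      refine ⟨(hfeas x).mpr hxp, fun y hyf hxy => ?_⟩
      by_contra hne
      obtain ⟨p, hpy, hpx⟩ := Finset.exists_of_ssubset (hxy.ssubset_of_ne hne)
      obtain ⟨q, hqx, hq⟩ := hxm p hpx
      have hpq : p ≠ q := fun h => hpx (h ▸ hqx)
      exact hq ((hfeas y).mp hyf hpy (hxy hqx) hpq)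
  refine ⟨hfeas, hmaxiff, fun x => ?_⟩
  have hmaxofmax : ∀ x : Finset P, Feasible w t x →
      (∀ y, Feasible w t y → y.card ≤ x.card) → MaximalState w t x := by
    intro x hx hc
    exact ⟨hx, fun y hy hxy => Finset.eq_of_subset_of_card_le hxy (hc y hy)⟩
  obtain ⟨mstar, hmstar_mem, hmstar_max⟩ :=
    Finset.exists_max_image (Finset.univ.filter (fun y : Finset P => Feasible w t y))
      Finset.card ⟨∅, Finset.mem_filter.mpr ⟨Finset.mem_univ _, fun i => by simp⟩⟩
  have hmstar_feas : Feasible w t mstar := (Finset.mem_filter.mp hmstar_mem).2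
  have hmstar_max' : ∀ y, Feasible w t y → y.card ≤ mstar.card := fun y hy =>
    hmstar_max y (Finset.mem_filter.mpr ⟨Finset.mem_univ y, hy⟩)
  have hpot : ∀ z : Finset P, MaximalState w t z →
      ∃ f, IsTree w t z f ∧ treeRes w t z f = potential w t z := by
    intro z hz
    have h := Nat.sInf_mem (potential_nonempty w t hz)
    rw [Set.mem_setOf_eq] at h
    exact h
  have hple : ∀ a b : Finset P, MaximalState w t a → MaximalState w t b →
      potential w t a + a.card ≤ potential w t b + b.card := by
    intro a b ha hb
    obtain ⟨f, hf, hfres⟩ := hpot b hb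
    obtain ⟨g, hg, hgres⟩ := reroot w t hf ha
    have hle : potential w t a ≤ treeRes w t a g := Nat.sInf_le ⟨g, hg, rfl⟩
    omega
  constructor
  · rintro ⟨hxmax, hxmin⟩
    refine ⟨(hfeas x).mp hxmax.1, fun y hy => ?_⟩
    have hyf := (hfeas y).mpr hy
    by_contra hlt
    push_neg at hlt
    have hmm : MaximalState w t mstar := hmaxofmax mstar hmstar_feas hmstar_max'
    have h1 := hple mstar x hmm hxmax
    have h2 := hxmin mstar hmm
    have h3 : x.card < mstar.card := lt_of_lt_of_le hlt (hmstar_max' y hyf)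
    omega
  · rintro ⟨hxp, hxc⟩
    have hxf := (hfeas x).mpr hxp
    have hxcard : ∀ y, Feasible w t y → y.card ≤ x.card := fun y hy =>
      hxc y ((hfeas y).mp hy)
    have hxmax := hmaxofmax x hxf hxcard
    refine ⟨hxmax, fun y hy => ?_⟩
    have h1 := hple x y hxmax hy
    have h2 : y.card ≤ x.card := hxcard y hy.1
    omega
end TF
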